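/- arXiv:1610.05445 — 2 statements merged into one kernel-verified Lean document; each statement's English description precedes it below -/
import Mathlib

section
/- Let f : ℕ → ℕ → Fin 2 and define g : ℕ → Fin 2 on positive naturals by g(n) = f(λ(n))(μ(n)) if λ(n) ≠ μ(n) and g(n) = 0 otherwise. Suppose h is a strictly increasing apart sequence of positive naturals with all adjacent sums g-colored d. Then setting H₁ = {λ(h i) : i ∈ ℕ} and H₂ = {μ(h i) : i ∈ ℕ}, the pair (H₁, H₂) is increasing p-homogeneous for f with color d, i.e., f x₁ x₂ = d for all x₁ ∈ H₁, x₂ ∈ H₂ with x₁ < x₂. -/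
/-- λ(n): the 2-adic valuation of n (least exponent in binary expansion). -/
def lam (n : ℕ) : ℕ := padicValNat 2 n

/-- μ(n): ⌊log₂ n⌋ (greatest exponent in binary expansion). -/
def mu (n : ℕ) : ℕ := Nat.log 2 n

/-- Apartness condition for a sequence. -/
def Apart (h : ℕ → ℕ) : Prop := ∀ i j, i < j → mu (h i) < lam (h j)

/-- Sum of adjacent elements h i + h (i+1) + ... + h j. -/
def adjSum (h : ℕ → ℕ) (i j : ℕ) : ℕ := ∑ t ∈ Finset.Icc i j, h t

lemma pow_lam_dvd (n : ℕ) : 2 ^ lam n ∣ n := pow_padicValNat_dvd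

lemma lam_le_mu {n : ℕ} (hn : 0 < n) : lam n ≤ mu n := by
  have h1 : 2 ^ lam n ≤ n := Nat.le_of_dvd hn (pow_lam_dvd n)
  exact (Nat.le_log_iff_pow_le one_lt_two hn.ne').mpr h1

lemma lt_pow_mu {n : ℕ} : n < 2 ^ (mu n + 1) := Nat.lt_pow_succ_log_self one_lt_two n

lemma lam_eq_of {n v : ℕ} (hn : n ≠ 0) (h1 : 2 ^ v ∣ n) (h2 : ¬ 2 ^ (v + 1) ∣ n) :
    lam n = v := by
  have := Fact.mk Nat.prime_two
  have hle : v ≤ lam n := (padicValNat_dvd_iff_le hn).mp h1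
  have hge : lam n ≤ v := by
    by_contra hc
    exact h2 ((padicValNat_dvd_iff_le hn).mpr (not_le.mp hc))
  omega

lemma not_pow_succ_lam_dvd {n : ℕ} (hn : n ≠ 0) : ¬ 2 ^ (lam n + 1) ∣ n := by
  have := Fact.mk Nat.prime_two
  exact pow_succ_padicValNat_not_dvd hn

section Main

variable {h : ℕ → ℕ} (hpos : ∀ i, 0 < h i) (hap : Apart h)

include hpos hap in
lemma adjSum_lt (i j : ℕ) (hij : i ≤ j) : adjSum h i j < 2 ^ (mu (h j) + 1) := by
  induction j with
  | zero =>
    interval_cases i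
    simpa [adjSum] using lt_pow_mu
  | succ j ih =>
    rcases Nat.eq_or_lt_of_le hij with rfl | hlt
    · simpa [adjSum] using lt_pow_mu
    · have hij' : i ≤ j := Nat.lt_succ_iff.mp hlt
      have hsplit : adjSum h i (j + 1) = adjSum h i j + h (j + 1) := by
        unfold adjSum
        rw [← Finset.sum_Icc_succ_top hij]
      have h1 : adjSum h i j < 2 ^ (mu (h j) + 1) := ih hij'
      have h2 : mu (h j) < lam (h (j + 1)) := hap j (j + 1) (Nat.lt_succ_self j)
      have h3 : 2 ^ (mu (h j) + 1) ≤ 2 ^ lam (h (j + 1)) :=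
        Nat.pow_le_pow_right (by norm_num) h2
      -- h (j+1) ≤ 2^(mu+1) - 2^lam
      have hlm : lam (h (j + 1)) ≤ mu (h (j + 1)) := lam_le_mu (hpos _)
      have hdvd : 2 ^ lam (h (j + 1)) ∣ 2 ^ (mu (h (j + 1)) + 1) - h (j + 1) := by
        apply Nat.dvd_sub
        · exact pow_dvd_pow 2 (by omega)
        · exact pow_lam_dvd _
      have hposdiff : 0 < 2 ^ (mu (h (j + 1)) + 1) - h (j + 1) := by
        have := lt_pow_mu (n := h (j + 1)); omega
      have h4 : 2 ^ lam (h (j + 1)) ≤ 2 ^ (mu (h (j + 1)) + 1) - h (j + 1) :=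
        Nat.le_of_dvd hposdiff hdvd
      have := lt_pow_mu (n := h (j + 1))
      omega

include hpos hap in
lemma mu_adjSum (i j : ℕ) (hij : i ≤ j) : mu (adjSum h i j) = mu (h j) := by
  have h1 : h j ≤ adjSum h i j := by
    unfold adjSum
    exact Finset.single_le_sum (fun t _ => Nat.zero_le _) (Finset.mem_Icc.mpr ⟨hij, le_rfl⟩)
  have h2 : adjSum h i j < 2 ^ (mu (h j) + 1) := adjSum_lt hpos hap i j hij
  have hle : mu (h j) ≤ mu (adjSum h i j) := Nat.log_mono_right h1
  have hge : mu (adjSum h i j) < mu (h j) + 1 := by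
    have hne : adjSum h i j ≠ 0 := by have := hpos j; omega
    exact Nat.log_lt_of_lt_pow hne h2
  omega

include hpos hap in
lemma lam_adjSum (i j : ℕ) (hij : i ≤ j) : lam (adjSum h i j) = lam (h i) := by
  have hsplit : adjSum h i j = h i + ∑ t ∈ Finset.Icc (i + 1) j, h t := by
    unfold adjSum
    have : Finset.Icc i j = insert i (Finset.Icc (i + 1) j) := by
      ext t; simp only [Finset.mem_Icc, Finset.mem_insert]; omega
    rw [this, Finset.sum_insert (by simp)]
  set R := ∑ t ∈ Finset.Icc (i + 1) j, h t with hR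
  have hRdvd : 2 ^ (mu (h i) + 1) ∣ R := by
    apply Finset.dvd_sum
    intro t ht
    have hit : i < t := by have := (Finset.mem_Icc.mp ht).1; omega
    have h2 : mu (h i) < lam (h t) := hap i t hit
    exact dvd_trans (pow_dvd_pow 2 h2) (pow_lam_dvd _)
  have hlm : lam (h i) ≤ mu (h i) := lam_le_mu (hpos i)
  have hne : h i + R ≠ 0 := by have := hpos i; omega
  rw [hsplit]
  apply lam_eq_of hne
  · exact Nat.dvd_add (pow_lam_dvd _) (dvd_trans (pow_dvd_pow 2 (by omega)) hRdvd)
  · intro hcon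
    have hR2 : 2 ^ (lam (h i) + 1) ∣ R := dvd_trans (pow_dvd_pow 2 (by omega)) hRdvd
    have : 2 ^ (lam (h i) + 1) ∣ h i := (Nat.dvd_add_right hR2).mp (by rwa [Nat.add_comm (h i) R] at hcon)
    exact not_pow_succ_lam_dvd (hpos i).ne' this

end Main

theorem aht_witness_gives_ipt_witness (f : ℕ → ℕ → Fin 2)
    (g : ℕ → Fin 2)
    (hg : ∀ n, g n = if lam n ≠ mu n then f (lam n) (mu n) else 0)
    (h : ℕ → ℕ) (hmono : StrictMono h) (hpos : ∀ i, 0 < h i) (hap : Apart h)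
    (d : Fin 2) (hhom : ∀ i j, i ≤ j → g (adjSum h i j) = d) :
    ∀ x₁ ∈ {x | ∃ i, x = lam (h i)}, ∀ x₂ ∈ {x | ∃ i, x = mu (h i)},
      x₁ < x₂ → f x₁ x₂ = d := by
  rintro x₁ ⟨i, rfl⟩ x₂ ⟨j, rfl⟩ hx
  have hij : i ≤ j := by
    by_contra hc
    have := hap j i (not_le.mp hc)
    have := lam_le_mu (hpos j)
    omega
  have hl : lam (adjSum h i j) = lam (h i) := lam_adjSum hpos hap i j hij
  have hm : mu (adjSum h i j) = mu (h j) := mu_adjSum hpos hap i j hij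
  have hd := hhom i j hij
  rw [hg] at hd
  rw [hl, hm] at hd
  rwa [if_pos (by omega)] at hd
end

section
/- The Adjacent Hindman Theorem holds for all finite colorings: for every k and every c : ℕ → Fin k, there exists a strictly increasing sequence h : ℕ → ℕ of positive naturals satisfying apartness (for all i < j, μ(h i) < λ(h j)) and a color d such that c(h i + h(i+1) + ... + h j) = d for all i ≤ j. -/
section Aux

lemma myExistsStrictMono {S : Set ℕ} (hS : S.Infinite) :
    ∃ g : ℕ → ℕ, StrictMono g ∧ ∀ n, g n ∈ S := by
  choose gnext hmem hlt using fun x => hS.exists_gt x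
  refine ⟨fun n => gnext^[n+1] 0, strictMono_nat_of_lt_succ fun n => ?_, fun n => ?_⟩
  · show gnext^[n+1] 0 < gnext^[n+1+1] 0
    rw [Function.iterate_succ_apply' gnext (n+1)]
    exact hlt _
  · show gnext^[n+1] 0 ∈ S
    rw [Function.iterate_succ_apply']
    exact hmem _

lemma exists_step {k : ℕ} (f : ℕ → ℕ → Fin k) (A : Set ℕ) (hA : A.Infinite) (x : ℕ) :
    ∃ B : Set ℕ, B ⊆ A ∧ B.Infinite ∧ ∃ e, ∀ y ∈ B, x < y ∧ f x y = e := by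
  have hA' : (A \ Set.Iic x).Infinite := hA.diff (Set.finite_Iic x)
  have : ∃ e, {y ∈ A \ Set.Iic x | f x y = e}.Infinite := by
    by_contra hc
    push_neg at hc
    exact hA' ((Set.finite_iUnion hc).subset fun y hy => Set.mem_iUnion.2 ⟨f x y, hy, rfl⟩)
  obtain ⟨e, he⟩ := this
  exact ⟨_, fun y hy => hy.1.1, he, e, fun y hy => ⟨not_le.1 hy.1.2, hy.2⟩⟩

noncomputable def nextSet {k : ℕ} (f : ℕ → ℕ → Fin k) (p : {A : Set ℕ // A.Infinite}) :
    {A : Set ℕ // A.Infinite} :=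
  ⟨(exists_step f p.1 p.2 p.2.nonempty.choose).choose,
   (exists_step f p.1 p.2 p.2.nonempty.choose).choose_spec.2.1⟩

noncomputable def xOf (p : {A : Set ℕ // A.Infinite}) : ℕ := p.2.nonempty.choose

lemma xOf_mem (p : {A : Set ℕ // A.Infinite}) : xOf p ∈ p.1 :=
  p.2.nonempty.choose_spec

lemma nextSet_subset {k : ℕ} (f : ℕ → ℕ → Fin k) (p) : (nextSet f p).1 ⊆ p.1 :=
  (exists_step f p.1 p.2 p.2.nonempty.choose).choose_spec.1

lemma nextSet_spec {k : ℕ} (f : ℕ → ℕ → Fin k) (p) :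
    ∃ e, ∀ y ∈ (nextSet f p).1, xOf p < y ∧ f (xOf p) y = e :=
  (exists_step f p.1 p.2 p.2.nonempty.choose).choose_spec.2.2

noncomputable def chain {k : ℕ} (f : ℕ → ℕ → Fin k) (n : ℕ) : {A : Set ℕ // A.Infinite} :=
  (nextSet f)^[n] ⟨Set.univ, Set.infinite_univ⟩

lemma chain_succ {k : ℕ} (f : ℕ → ℕ → Fin k) (n : ℕ) :
    chain f (n + 1) = nextSet f (chain f n) := Function.iterate_succ_apply' _ _ _

noncomputable def xseq {k : ℕ} (f : ℕ → ℕ → Fin k) (n : ℕ) : ℕ := xOf (chain f n)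

noncomputable def eseq {k : ℕ} (f : ℕ → ℕ → Fin k) (n : ℕ) : Fin k :=
  (nextSet_spec f (chain f n)).choose

lemma eseq_spec {k : ℕ} (f : ℕ → ℕ → Fin k) (n : ℕ) :
    ∀ y ∈ (chain f (n+1)).1, xseq f n < y ∧ f (xseq f n) y = eseq f n := by
  rw [chain_succ]
  exact (nextSet_spec f (chain f n)).choose_spec

lemma chain_mono {k : ℕ} (f : ℕ → ℕ → Fin k) {n m : ℕ} (h : n ≤ m) :
    (chain f m).1 ⊆ (chain f n).1 := by
  induction m with
  | zero => simp_all
  | succ m ih =>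
    rcases Nat.lt_or_ge n (m+1) with h' | h'
    · have step : (chain f (m+1)).1 ⊆ (chain f m).1 := by
        rw [chain_succ]; exact nextSet_subset f _
      exact step.trans (ih (Nat.lt_succ_iff.1 h'))
    · have : n = m + 1 := le_antisymm h h'
      subst this; exact subset_rfl

lemma xseq_mem {k : ℕ} (f : ℕ → ℕ → Fin k) (n : ℕ) : xseq f n ∈ (chain f n).1 := xOf_mem _

/-- Infinite Ramsey theorem for pairs. -/
lemma ramsey_pairs {k : ℕ} (f : ℕ → ℕ → Fin k) :
    ∃ d : Fin k, ∃ s : ℕ → ℕ, StrictMono s ∧ ∀ m n, m < n → f (s m) (s n) = d := by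
  have key : ∀ m n, m < n → xseq f m < xseq f n ∧ f (xseq f m) (xseq f n) = eseq f m :=
    fun m n hmn => eseq_spec f m _ (chain_mono f hmn (xseq_mem f n))
  have : ∃ d, {n | eseq f n = d}.Infinite := by
    by_contra hc
    push_neg at hc
    exact Set.infinite_univ
      ((Set.finite_iUnion hc).subset fun y _ => Set.mem_iUnion.2 ⟨eseq f y, rfl⟩)
  obtain ⟨d, hd⟩ := this
  obtain ⟨g, hg, hgm⟩ := myExistsStrictMono hd
  refine ⟨d, fun n => xseq f (g n), fun a b hab => (key _ _ (hg hab)).1, fun m n hmn => ?_⟩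
  rw [(key _ _ (hg hmn)).2]
  exact hgm m

lemma lam_pow_sub {a b : ℕ} (hab : a < b) : lam (2^(b+1) - 2^(a+1)) = a + 1 := by
  have h1 : 2^(b+1) - 2^(a+1) = 2^(a+1) * (2^(b-a) - 1) := by
    rw [Nat.mul_sub_one, ← pow_add]
    congr 2
    omega
  rw [lam, h1]
  haveI : Fact (Nat.Prime 2) := ⟨Nat.prime_two⟩
  have h3 : 2 ≤ 2^(b-a) := by
    calc 2 = 2^1 := rfl
    _ ≤ 2^(b-a) := Nat.pow_le_pow_right (by norm_num) (by omega)
  have hodd : ¬ (2 ∣ (2^(b-a) - 1)) := by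
    have h2 : (2:ℕ) ∣ 2^(b-a) := dvd_pow_self 2 (by omega)
    intro h
    have := Nat.dvd_sub h2 h
    have heq : 2^(b-a) - (2^(b-a) - 1) = 1 := by omega
    rw [heq] at this
    omega
  rw [padicValNat.mul (by positivity) (by omega), padicValNat.prime_pow,
    padicValNat.eq_zero_of_not_dvd hodd]

lemma mu_pow_sub {a b : ℕ} (hab : a < b) : mu (2^(b+1) - 2^(a+1)) = b := by
  rw [mu]
  apply Nat.log_eq_of_pow_le_of_lt_pow
  · have h1 : 2^(a+1) ≤ 2^b := Nat.pow_le_pow_right (by norm_num) (by omega)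
    have h2 : 2^b + 2^b = 2^(b+1) := by ring
    omega
  · have h1 : 0 < 2^(a+1) := by positivity
    have h2 : 0 < 2^(b+1) := by positivity
    omega

lemma adjSum_telescope (s : ℕ → ℕ) (hs : StrictMono s) (i j : ℕ) (hij : i ≤ j) :
    adjSum (fun n => 2^(s (n+1) + 1) - 2^(s n + 1)) i j = 2^(s (j+1) + 1) - 2^(s i + 1) := by
  induction j with
  | zero =>
    have : i = 0 := by omega
    subst this
    simp [adjSum]
  | succ j ih =>
    rcases Nat.lt_or_ge i (j+1) with h' | h'
    · have hij' : i ≤ j := by omega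
      have := ih hij'
      rw [adjSum, Finset.sum_Icc_succ_top (by omega), ← adjSum, this]
      have h1 : 2^(s i + 1) ≤ 2^(s (j+1) + 1) :=
        Nat.pow_le_pow_right (by norm_num) (by have := hs.le_iff_le.2 (show i ≤ j+1 by omega); omega)
      have h2 : 2^(s (j+1) + 1) ≤ 2^(s (j+1+1) + 1) :=
        Nat.pow_le_pow_right (by norm_num) (by have := hs (show j+1 < j+1+1 by omega); omega)
      omega
    · have : i = j + 1 := by omega
      subst this
      simp [adjSum]

end Aux

theorem adjacent_hindman (k : ℕ) (c : ℕ → Fin k) :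
    ∃ h : ℕ → ℕ, StrictMono h ∧ (∀ i, 0 < h i) ∧ Apart h ∧
      ∃ d : Fin k, ∀ i j, i ≤ j → c (adjSum h i j) = d := by
  obtain ⟨d, s, hs, hmono⟩ := ramsey_pairs (fun i j => c (2^(j+1) - 2^(i+1)))
  refine ⟨fun n => 2^(s (n+1) + 1) - 2^(s n + 1), ?_, ?_, ?_, d, ?_⟩
  · apply strictMono_nat_of_lt_succ
    intro n
    show 2^(s (n+1) + 1) - 2^(s n + 1) < 2^(s (n+1+1) + 1) - 2^(s (n+1) + 1)
    have h0 : (0:ℕ) < 2^(s n + 1) := by positivity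
    have h1 : 2^(s n + 1) < 2^(s (n+1) + 1) :=
      Nat.pow_lt_pow_right (by norm_num) (by have := hs (lt_add_one n); omega)
    have h2 : 2^(s (n+1) + 1) + 2^(s (n+1) + 1) ≤ 2^(s (n+1+1) + 1) := by
      have : 2^(s (n+1) + 2) ≤ 2^(s (n+1+1) + 1) :=
        Nat.pow_le_pow_right (by norm_num) (by have := hs (show n+1 < n+1+1 by omega); omega)
      have heq : 2^(s (n+1) + 1) + 2^(s (n+1) + 1) = 2^(s (n+1) + 2) := by ring
      omega
    omega
  · intro n
    show 0 < 2^(s (n+1) + 1) - 2^(s n + 1)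
    have h1 : 2^(s n + 1) < 2^(s (n+1) + 1) :=
      Nat.pow_lt_pow_right (by norm_num) (by have := hs (lt_add_one n); omega)
    omega
  · intro i j hij
    rw [mu_pow_sub (hs (lt_add_one i)), lam_pow_sub (hs (lt_add_one j))]
    have : s (i+1) ≤ s j := hs.le_iff_le.2 (by omega)
    omega
  · intro i j hij
    rw [adjSum_telescope s hs i j hij]
    exact hmono i (j+1) (by omega)
end
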